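/- Let A be a commutative normed ring, and let M and N be normed A-modules (so ‖a•m‖ ≤ ‖a‖·‖m‖) whose norms are nonarchimedean, and suppose both M and N admit pseudo-Cartesian systems of generators. Then every surjective continuous A-linear map φ: M → N is strict; more precisely, there exists a constant D > 0 such that every ν ∈ N has a preimage μ ∈ M with φ(μ) = ν and ‖μ‖ ≤ D·‖ν‖. -/

import Mathlib

/-- A normed `A`-module `M` has a *pseudo-Cartesian* system of generators
`μ₁, …, μ_s` if every `m ∈ M` can be written `m = a₁μ₁ + ⋯ + a_sμ_s` with
`‖m‖ = max_i ‖a_i‖·‖μ_i‖`. -/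
def HasPseudoCartesianGenerators (A : Type*) (M : Type*) [NormedCommRing A]
    [NormedAddCommGroup M] [Module A M] : Prop :=
  ∃ (s : ℕ) (μ : Fin s → M), ∀ m : M, ∃ a : Fin s → A,
    m = ∑ i, a i • μ i ∧ ‖m‖₊ = Finset.univ.sup fun i => ‖a i‖₊ * ‖μ i‖₊

lemma norm_sum_le_of_nonarch' {M : Type*} [NormedAddCommGroup M]
    (hna : ∀ x y : M, ‖x + y‖ ≤ max ‖x‖ ‖y‖) {ι : Type*} (s : Finset ι)
    (f : ι → M) {c : ℝ} (hc : 0 ≤ c) (h : ∀ i ∈ s, ‖f i‖ ≤ c) :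
    ‖∑ i ∈ s, f i‖ ≤ c := by
  induction s using Finset.cons_induction with
  | empty => simpa using hc
  | cons a s ha ih =>
    rw [Finset.sum_cons]
    exact (hna _ _).trans (max_le (h a (Finset.mem_cons_self _ _))
      (ih fun i hi => h i (Finset.mem_cons_of_mem hi)))

/-- Let `A` be a commutative normed ring, and `M`, `N` normed
`A`-modules with nonarchimedean norms, both admitting pseudo-Cartesian systems
of generators.  Then every surjective continuous `A`-linear map `φ : M → N` is
strict; precisely, there is a constant `D > 0` such that every `ν ∈ N` has a
preimage `μ ∈ M` with `φ μ = ν` and `‖μ‖ ≤ D·‖ν‖`. -/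
theorem surjective_linear_of_pseudoCartesian_isStrict {A : Type*}
    [NormedCommRing A] {M N : Type*} [NormedAddCommGroup M]
    [NormedAddCommGroup N] [Module A M] [Module A N] [IsBoundedSMul A M]
    [IsBoundedSMul A N]
    (hnaM : ∀ x y : M, ‖x + y‖ ≤ max ‖x‖ ‖y‖)
    (hnaN : ∀ x y : N, ‖x + y‖ ≤ max ‖x‖ ‖y‖)
    (hM : HasPseudoCartesianGenerators A M)
    (hN : HasPseudoCartesianGenerators A N)
    (φ : M →ₗ[A] N) (hφc : Continuous φ) (hφs : Function.Surjective φ) :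
    ∃ D : ℝ, 0 < D ∧ ∀ ν : N, ∃ μ : M, φ μ = ν ∧ ‖μ‖ ≤ D * ‖ν‖ := by
  obtain ⟨t, g, hgen⟩ := hN
  -- choose preimages of the generators, taking 0 when the generator is 0
  have hm : ∀ i : Fin t, ∃ m : M, φ m = g i ∧ (g i = 0 → m = 0) := by
    intro i
    by_cases h : g i = 0
    · exact ⟨0, by simp [h], fun _ => rfl⟩
    · obtain ⟨m, hm⟩ := hφs (g i)
      exact ⟨m, hm, fun h' => absurd h' h⟩
  choose m hmφ hm0 using hm
  set c : NNReal := Finset.univ.sup fun i => ‖m i‖₊ * (‖g i‖₊)⁻¹ with hc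
  have hkey : ∀ i, ‖m i‖₊ ≤ c * ‖g i‖₊ := by
    intro i
    by_cases h : g i = 0
    · simp [hm0 i h]
    · have hg : ‖g i‖₊ ≠ 0 := by simpa using h
      calc ‖m i‖₊ = ‖m i‖₊ * (‖g i‖₊)⁻¹ * ‖g i‖₊ := by
            rw [mul_assoc, inv_mul_cancel₀ hg, mul_one]
        _ ≤ c * ‖g i‖₊ :=
            mul_le_mul_left (Finset.le_sup (f := fun i => ‖m i‖₊ * (‖g i‖₊)⁻¹) (Finset.mem_univ i)) _
  refine ⟨(c : ℝ) + 1, by positivity, fun ν => ?_⟩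
  obtain ⟨b, hb, hbn⟩ := hgen ν
  refine ⟨∑ i, b i • m i, ?_, ?_⟩
  · rw [map_sum, hb]
    simp [hmφ]
  · have hterm : ∀ i ∈ (Finset.univ : Finset (Fin t)),
        ‖b i • m i‖ ≤ ((c : ℝ) + 1) * ‖ν‖ := by
      intro i _
      have h1 : ‖b i • m i‖₊ ≤ c * ‖ν‖₊ := by
        calc ‖b i • m i‖₊ ≤ ‖b i‖₊ * ‖m i‖₊ := nnnorm_smul_le _ _
          _ ≤ ‖b i‖₊ * (c * ‖g i‖₊) := mul_le_mul_right (hkey i) _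
          _ = c * (‖b i‖₊ * ‖g i‖₊) := by ring
          _ ≤ c * ‖ν‖₊ := by
              rw [hbn]
              exact mul_le_mul_right (Finset.le_sup (f := fun i => ‖b i‖₊ * ‖g i‖₊) (Finset.mem_univ i)) _
      have h2 : ‖b i • m i‖ ≤ (c : ℝ) * ‖ν‖ := by
        have := (NNReal.coe_le_coe.2 h1)
        simpa [NNReal.coe_mul, coe_nnnorm] using this
      nlinarith [norm_nonneg ν]
    exact norm_sum_le_of_nonarch' hnaM Finset.univ _
      (by positivity) hterm
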